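/- Let h₀ > 0, J = (0, h₀), λ > 0 and M ≥ 0. Let Ḡ : (0, h₀] × ℝ → ℝ be continuous, and suppose there is a positive continuous function ψ on (0, h₀] with ∫₀^{h₀} ψ(h) dh < ∞ such that Ḡ(h, q) ≥ |q|/ψ(h) − M for all h ∈ (0, h₀] and q ∈ ℝ. Let F be a family of continuous functions on [0, h₀] each of whose members restricts on J to a viscosity subsolution of λv + Ḡ(h, v′) = 0 in J. If F is uniformly bounded on [0, h₀], then F is equi-continuous on [0, h₀]. -/

import Mathlib

open Filter Topology Set Metric MeasureTheory

noncomputable section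

theorem aux_endpoint_max
    (h₀ lam M : ℝ) (hlam : 0 < lam)
    (Gb : ℝ → ℝ → ℝ)
    (ψ : ℝ → ℝ) (hψpos : ∀ h ∈ Ioc 0 h₀, 0 < ψ h)
    (hcoer : ∀ h ∈ Ioc 0 h₀, ∀ q : ℝ, |q| / ψ h - M ≤ Gb h q)
    (v : ℝ → ℝ) (hvc : ContinuousOn v (Icc 0 h₀))
    (hsub : ∀ φ : ℝ → ℝ, ContDiff ℝ 1 φ → ∀ z ∈ Ioo 0 h₀,
      IsLocalMaxOn (fun h => v h - φ h) (Ioo 0 h₀) z →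
      lam * v z + Gb z (deriv φ z) ≤ 0)
    (C : ℝ) (hC : ∀ h ∈ Icc 0 h₀, |v h| ≤ C)
    (l r : ℝ) (hl : 0 < l) (hlr : l ≤ r) (hr : r < h₀)
    (φ : ℝ → ℝ) (hφ : ContDiff ℝ 1 φ)
    (hslope : ∀ z ∈ Icc l r, (M + lam * C) * ψ z < |deriv φ z|) :
    ∀ t ∈ Icc l r, v t - φ t ≤ max (v l - φ l) (v r - φ r) := by
  have hsubIcc : Icc l r ⊆ Icc 0 h₀ := Icc_subset_Icc hl.le hr.le
  have hgc : ContinuousOn (fun t => v t - φ t) (Icc l r) :=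
    (hvc.mono hsubIcc).sub (hφ.continuous.continuousOn)
  obtain ⟨z, hz, hzmax⟩ := (isCompact_Icc (a := l) (b := r)).exists_isMaxOn
    (nonempty_Icc.mpr hlr) hgc
  have hzmax' : ∀ t ∈ Icc l r, v t - φ t ≤ v z - φ z := hzmax
  intro t ht
  refine le_trans (hzmax' t ht) ?_
  by_contra hcon
  push_neg at hcon
  have hzl : z ≠ l := by rintro rfl; exact absurd (le_max_left _ _) (not_le.mpr hcon)
  have hzr : z ≠ r := by rintro rfl; exact absurd (le_max_right _ _) (not_le.mpr hcon)
  have hzIoo : z ∈ Ioo l r := ⟨lt_of_le_of_ne hz.1 (Ne.symm hzl), lt_of_le_of_ne hz.2 hzr⟩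
  have hz0 : z ∈ Ioo 0 h₀ := ⟨hl.trans hzIoo.1, hzIoo.2.trans hr⟩
  have hloc : IsLocalMaxOn (fun h => v h - φ h) (Ioo 0 h₀) z := by
    have hmem : Ioo l r ∈ 𝓝[Ioo 0 h₀] z :=
      mem_nhdsWithin_of_mem_nhds (isOpen_Ioo.mem_nhds hzIoo)
    filter_upwards [hmem] with t ht'
    exact hzmax' t (Ioo_subset_Icc_self ht')
  have hkey := hsub φ hφ z hz0 hloc
  have hψz : 0 < ψ z := hψpos z ⟨hz0.1, hz0.2.le⟩
  have hco := hcoer z ⟨hz0.1, hz0.2.le⟩ (deriv φ z)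
  have hvz : -v z ≤ C := by
    have := (abs_le.mp (hC z (hsubIcc hz))).1; linarith
  have h1 : |deriv φ z| / ψ z ≤ M + lam * C := by
    have : Gb z (deriv φ z) ≤ lam * C := by nlinarith
    linarith
  have h2 : |deriv φ z| ≤ (M + lam * C) * ψ z := by
    rw [div_le_iff₀ hψz] at h1; linarith
  exact absurd h2 (not_le.mpr (hslope z hz))

theorem aux_up
    (h₀ lam M : ℝ) (hh₀ : 0 < h₀) (hlam : 0 < lam) (hM : 0 ≤ M)
    (Gb : ℝ → ℝ → ℝ)
    (ψ : ℝ → ℝ) (hψc : ContinuousOn ψ (Ioc 0 h₀)) (hψpos : ∀ h ∈ Ioc 0 h₀, 0 < ψ h)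
    (hcoer : ∀ h ∈ Ioc 0 h₀, ∀ q : ℝ, |q| / ψ h - M ≤ Gb h q)
    (v : ℝ → ℝ) (hvc : ContinuousOn v (Icc 0 h₀))
    (hsub : ∀ φ : ℝ → ℝ, ContDiff ℝ 1 φ → ∀ z ∈ Ioo 0 h₀,
      IsLocalMaxOn (fun h => v h - φ h) (Ioo 0 h₀) z →
      lam * v z + Gb z (deriv φ z) ≤ 0)
    (C : ℝ) (hC0 : 0 ≤ C) (hC : ∀ h ∈ Icc 0 h₀, |v h| ≤ C)
    (y x : ℝ) (hy : 0 < y) (hyx : y ≤ x) (hx : x < h₀) (ζ : ℝ) (hζ : 0 < ζ) :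
    v x - v y ≤ (M + lam * C) * (∫ s in y..x, ψ s) + ζ := by
  by_contra hcon
  push_neg at hcon
  set K := M + lam * C with hK
  have hK0 : 0 ≤ K := by nlinarith
  set b := (x + h₀) / 2 with hb
  have hxb : x < b := by rw [hb]; linarith
  have hbh : b < h₀ := by rw [hb]; linarith
  have hyb : y ≤ b := hyx.trans hxb.le
  have hsubI : Icc y b ⊆ Ioc 0 h₀ := fun t ht => ⟨hy.trans_le ht.1, ht.2.trans hbh.le⟩
  set c : ℝ → ℝ := fun t => min (max t y) b with hcdef
  have hcc : Continuous c := (continuous_id.max continuous_const).min continuous_const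
  have hcmem : ∀ t, c t ∈ Icc y b := fun t => ⟨le_min (le_max_right _ _) hyb, min_le_right _ _⟩
  have hψbc : Continuous (ψ ∘ c) := hψc.comp_continuous hcc (fun t => hsubI (hcmem t))
  set ψb : ℝ → ℝ := ψ ∘ c with hψbdef
  have hψbeq : ∀ t ∈ Icc y b, ψb t = ψ t := by
    intro t ht
    have : c t = t := by
      rw [hcdef]; simp only; rw [max_eq_left ht.1, min_eq_left ht.2]
    simp [hψbdef, Function.comp, this]
  have hψbpos : ∀ t, 0 < ψb t := fun t => hψpos _ (hsubI (hcmem t))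
  set η := ζ / (2 * h₀ + 2) with hηdef
  have hη : 0 < η := by positivity
  have hηh : η * h₀ < ζ / 2 := by
    rw [hηdef, div_mul_eq_mul_div, div_lt_div_iff₀ (by linarith) two_pos]; nlinarith
  set T := 2 * C + ζ with hTdef
  have hT : 0 < T := by rw [hTdef]; linarith
  have hxb' : x - b < 0 := by linarith
  obtain ⟨A, hAe, hA0⟩ : ∃ A : ℝ, T * Real.exp (A * (x - b)) < ζ / 2 ∧ 0 < A := by
    have htend : Tendsto (fun A : ℝ => T * Real.exp (A * (x - b))) atTop (𝓝 (T * 0)) := by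
      refine Tendsto.const_mul T (Real.tendsto_exp_atBot.comp ?_)
      exact Tendsto.atTop_mul_const_of_neg hxb' tendsto_id
    rw [mul_zero] at htend
    exact ((htend.eventually_lt_const (half_pos hζ)).and (eventually_gt_atTop 0)).exists
  set Prim : ℝ → ℝ := fun t => ∫ s in y..t, ψb s with hPrimdef
  have hPrimD : ∀ t, HasDerivAt Prim (ψb t) t := fun t =>
    (hψbc.integral_hasStrictDerivAt y t).hasDerivAt
  have hBarD : ∀ t, HasDerivAt (fun t => T * Real.exp (A * (t - b)))
      (T * (Real.exp (A * (t - b)) * A)) t := by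
    intro t
    have h1 : HasDerivAt (fun t : ℝ => A * (t - b)) A t := by
      simpa using ((hasDerivAt_id t).sub_const b).const_mul A
    exact (h1.exp).const_mul T
  set φ : ℝ → ℝ := fun t => K * Prim t + η * t + T * Real.exp (A * (t - b)) with hφdef
  have hφD : ∀ t, HasDerivAt φ (K * ψb t + η + T * (Real.exp (A * (t - b)) * A)) t := by
    intro t
    have h2 : HasDerivAt (fun t : ℝ => η * t) η t := by
      simpa using (hasDerivAt_id t).const_mul η
    exact (((hPrimD t).const_mul K).add h2).add (hBarD t)
  have hderiv : ∀ t, deriv φ t = K * ψb t + η + T * (Real.exp (A * (t - b)) * A) :=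
    fun t => (hφD t).deriv
  have hφ1 : ContDiff ℝ 1 φ := by
    rw [contDiff_one_iff_deriv]
    refine ⟨fun t => (hφD t).differentiableAt, ?_⟩
    rw [funext hderiv]
    fun_prop
  have hslope : ∀ z ∈ Icc y b, K * ψ z < |deriv φ z| := by
    intro z hz
    rw [hderiv z]
    have he := Real.exp_pos (A * (z - b))
    have hTeA : 0 < T * (Real.exp (A * (z - b)) * A) := mul_pos hT (mul_pos he hA0)
    have h3 : K * ψ z < K * ψb z + η + T * (Real.exp (A * (z - b)) * A) := by
      rw [hψbeq z hz]; linarith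
    exact h3.trans_le (le_abs_self _)
  have hmax := aux_endpoint_max h₀ lam M hlam Gb ψ hψpos hcoer v hvc hsub C hC
    y b hy hyb hbh φ hφ1 hslope x ⟨hyx, hxb.le⟩
  -- integral facts
  have hIeq : (∫ s in y..x, ψb s) = ∫ s in y..x, ψ s := by
    refine intervalIntegral.integral_congr ?_
    rw [uIcc_of_le hyx]
    exact fun t ht => hψbeq t ⟨ht.1, ht.2.trans hxb.le⟩
  have hPrimy : Prim y = 0 := intervalIntegral.integral_same
  have hPrimx : Prim x = ∫ s in y..x, ψ s := hIeq
  have hPrimbx : Prim b = Prim x + ∫ s in x..b, ψb s := by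
    rw [hPrimdef]
    exact (intervalIntegral.integral_add_adjacent_intervals
      (hψbc.intervalIntegrable y x) (hψbc.intervalIntegrable x b)).symm
  have hIxb : 0 ≤ ∫ s in x..b, ψb s :=
    intervalIntegral.integral_nonneg hxb.le (fun u _ => (hψbpos u).le)
  have he1 : 0 < Real.exp (A * (y - b)) := Real.exp_pos _
  have he2 : 0 < Real.exp (A * (x - b)) := Real.exp_pos _
  have he3 : Real.exp (A * (b - b)) = 1 := by rw [sub_self, mul_zero, Real.exp_zero]
  have hvb : |v b| ≤ C := hC b ⟨(hy.trans_le hyb).le, hbh.le⟩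
  have hvx : |v x| ≤ C := hC x ⟨(hy.trans_le hyx).le, hx.le⟩
  rw [abs_le] at hvb hvx
  clear_value K b c ψb η T Prim φ
  have hφxy : φ x - φ y = K * (∫ s in y..x, ψ s) + η * (x - y) +
      T * (Real.exp (A * (x - b)) - Real.exp (A * (y - b))) := by
    simp only [hφdef]
    rw [hPrimy, hPrimx]; ring
  have hφbx : φ b - φ x = K * (∫ s in x..b, ψb s) + η * (b - x) +
      T * (1 - Real.exp (A * (x - b))) := by
    simp only [hφdef]
    rw [hPrimbx, ← he3]; ring
  have hηxy : η * (x - y) ≤ η * h₀ :=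
    mul_le_mul_of_nonneg_left (by linarith) hη.le
  have h6 : T * (Real.exp (A * (x - b)) - Real.exp (A * (y - b))) < ζ / 2 := by
    rw [mul_sub]; linarith [mul_pos hT he1]
  have h4 : 0 ≤ K * (∫ s in x..b, ψb s) := mul_nonneg hK0 hIxb
  have h5 : 0 ≤ η * (b - x) := mul_nonneg hη.le (by linarith)
  have h7 : 2 * C + ζ / 2 < T * (1 - Real.exp (A * (x - b))) := by
    rw [mul_sub, mul_one]; linarith
  -- (i)
  have hi : v y - φ y < v x - φ x := by linarith
  -- (ii)
  have hii : v b - φ b < v x - φ x := by linarith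
  exact absurd hmax (not_le.mpr (max_lt hi hii))

theorem aux_down
    (h₀ lam M : ℝ) (hh₀ : 0 < h₀) (hlam : 0 < lam) (hM : 0 ≤ M)
    (Gb : ℝ → ℝ → ℝ)
    (ψ : ℝ → ℝ) (hψc : ContinuousOn ψ (Ioc 0 h₀)) (hψpos : ∀ h ∈ Ioc 0 h₀, 0 < ψ h)
    (hcoer : ∀ h ∈ Ioc 0 h₀, ∀ q : ℝ, |q| / ψ h - M ≤ Gb h q)
    (v : ℝ → ℝ) (hvc : ContinuousOn v (Icc 0 h₀))
    (hsub : ∀ φ : ℝ → ℝ, ContDiff ℝ 1 φ → ∀ z ∈ Ioo 0 h₀,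
      IsLocalMaxOn (fun h => v h - φ h) (Ioo 0 h₀) z →
      lam * v z + Gb z (deriv φ z) ≤ 0)
    (C : ℝ) (hC0 : 0 ≤ C) (hC : ∀ h ∈ Icc 0 h₀, |v h| ≤ C)
    (y x : ℝ) (hy : 0 < y) (hyx : y ≤ x) (hx : x < h₀) (ζ : ℝ) (hζ : 0 < ζ) :
    v y - v x ≤ (M + lam * C) * (∫ s in y..x, ψ s) + ζ := by
  by_contra hcon
  push_neg at hcon
  set K := M + lam * C with hK
  have hK0 : 0 ≤ K := by nlinarith
  set l := y / 2 with hl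
  have hl0 : 0 < l := by rw [hl]; linarith
  have hly : l < y := by rw [hl]; linarith
  have hlx : l ≤ x := (hly.trans_le hyx).le
  have hsubI : Icc l x ⊆ Ioc 0 h₀ := fun t ht => ⟨hl0.trans_le ht.1, ht.2.trans hx.le⟩
  set c : ℝ → ℝ := fun t => min (max t l) x with hcdef
  have hcc : Continuous c := (continuous_id.max continuous_const).min continuous_const
  have hcmem : ∀ t, c t ∈ Icc l x := fun t => ⟨le_min (le_max_right _ _) hlx, min_le_right _ _⟩
  have hψbc : Continuous (ψ ∘ c) := hψc.comp_continuous hcc (fun t => hsubI (hcmem t))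
  set ψb : ℝ → ℝ := ψ ∘ c with hψbdef
  have hψbeq : ∀ t ∈ Icc l x, ψb t = ψ t := by
    intro t ht
    have : c t = t := by
      rw [hcdef]; simp only; rw [max_eq_left ht.1, min_eq_left ht.2]
    simp [hψbdef, Function.comp, this]
  have hψbpos : ∀ t, 0 < ψb t := fun t => hψpos _ (hsubI (hcmem t))
  set η := ζ / (2 * h₀ + 2) with hηdef
  have hη : 0 < η := by positivity
  have hηh : η * h₀ < ζ / 2 := by
    rw [hηdef, div_mul_eq_mul_div, div_lt_div_iff₀ (by linarith) two_pos]; nlinarith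
  set T := 2 * C + ζ with hTdef
  have hT : 0 < T := by rw [hTdef]; linarith
  have hly' : l - y < 0 := by linarith
  obtain ⟨A, hAe, hA0⟩ : ∃ A : ℝ, T * Real.exp (A * (l - y)) < ζ / 4 ∧ 0 < A := by
    have htend : Tendsto (fun A : ℝ => T * Real.exp (A * (l - y))) atTop (𝓝 (T * 0)) := by
      refine Tendsto.const_mul T (Real.tendsto_exp_atBot.comp ?_)
      exact Tendsto.atTop_mul_const_of_neg hly' tendsto_id
    rw [mul_zero] at htend
    exact ((htend.eventually_lt_const (by linarith : (0:ℝ) < ζ / 4)).and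
      (eventually_gt_atTop 0)).exists
  set Prim : ℝ → ℝ := fun t => ∫ s in l..t, ψb s with hPrimdef
  have hPrimD : ∀ t, HasDerivAt Prim (ψb t) t := fun t =>
    (hψbc.integral_hasStrictDerivAt l t).hasDerivAt
  set φ : ℝ → ℝ := fun t => -(K * Prim t) - η * t + T * Real.exp (A * (l - t)) with hφdef
  have hφD : ∀ t, HasDerivAt φ (-(K * ψb t) - η - T * (Real.exp (A * (l - t)) * A)) t := by
    intro t
    have h1 : HasDerivAt (fun t : ℝ => A * (l - t)) (-A) t := by
      simpa using ((hasDerivAt_id t).const_sub l).const_mul A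
    have h2 : HasDerivAt (fun t : ℝ => η * t) η t := by
      simpa using (hasDerivAt_id t).const_mul η
    have h := (((hPrimD t).const_mul K).neg.sub h2).add ((h1.exp).const_mul T)
    exact h.congr_deriv (by ring)
  have hderiv : ∀ t, deriv φ t = -(K * ψb t) - η - T * (Real.exp (A * (l - t)) * A) :=
    fun t => (hφD t).deriv
  have hφ1 : ContDiff ℝ 1 φ := by
    rw [contDiff_one_iff_deriv]
    refine ⟨fun t => (hφD t).differentiableAt, ?_⟩
    rw [funext hderiv]
    fun_prop
  have hslope : ∀ z ∈ Icc l x, K * ψ z < |deriv φ z| := by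
    intro z hz
    rw [hderiv z]
    have he := Real.exp_pos (A * (l - z))
    have hTeA : 0 < T * (Real.exp (A * (l - z)) * A) := mul_pos hT (mul_pos he hA0)
    have h3 : K * ψ z < -(-(K * ψb z) - η - T * (Real.exp (A * (l - z)) * A)) := by
      rw [hψbeq z hz]; linarith
    exact h3.trans_le (neg_le_abs _)
  have hmax := aux_endpoint_max h₀ lam M hlam Gb ψ hψpos hcoer v hvc hsub C hC
    l x hl0 hlx hx φ hφ1 hslope y ⟨hly.le, hyx⟩
  -- integral facts
  have hIeq : (∫ s in y..x, ψb s) = ∫ s in y..x, ψ s := by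
    refine intervalIntegral.integral_congr ?_
    rw [uIcc_of_le hyx]
    exact fun t ht => hψbeq t ⟨hly.le.trans ht.1, ht.2⟩
  have hPriml : Prim l = 0 := intervalIntegral.integral_same
  have hPrimxy : Prim x = Prim y + ∫ s in y..x, ψ s := by
    rw [hPrimdef, ← hIeq]
    exact (intervalIntegral.integral_add_adjacent_intervals
      (hψbc.intervalIntegrable l y) (hψbc.intervalIntegrable y x)).symm
  have hIly : 0 ≤ Prim y :=
    intervalIntegral.integral_nonneg hly.le (fun u _ => (hψbpos u).le)
  have he1 : 0 < Real.exp (A * (l - y)) := Real.exp_pos _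
  have he2 : 0 < Real.exp (A * (l - x)) := Real.exp_pos _
  have he3 : Real.exp (A * (l - l)) = 1 := by rw [sub_self, mul_zero, Real.exp_zero]
  have hvl : |v l| ≤ C := hC l ⟨hl0.le, ((hly.trans_le hyx).trans hx).le⟩
  have hvy : |v y| ≤ C := hC y ⟨hy.le, (hyx.trans hx.le)⟩
  rw [abs_le] at hvl hvy
  clear_value K l c ψb η T Prim φ
  have hφyx : φ y - φ x = K * (∫ s in y..x, ψ s) + η * (x - y) +
      T * (Real.exp (A * (l - y)) - Real.exp (A * (l - x))) := by
    simp only [hφdef]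
    rw [hPrimxy]; ring
  have hφly : φ l - φ y = K * Prim y + η * (y - l) +
      T * (1 - Real.exp (A * (l - y))) := by
    simp only [hφdef]
    rw [hPriml, ← he3]; ring
  have hηxy : η * (x - y) ≤ η * h₀ :=
    mul_le_mul_of_nonneg_left (by linarith) hη.le
  have h6 : T * (Real.exp (A * (l - y)) - Real.exp (A * (l - x))) < ζ / 4 := by
    rw [mul_sub]; linarith [mul_pos hT he2]
  have h4 : 0 ≤ K * Prim y := mul_nonneg hK0 hIly
  have h5 : 0 ≤ η * (y - l) := mul_nonneg hη.le (by linarith)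
  have h7 : 2 * C + 3 * ζ / 4 ≤ T * (1 - Real.exp (A * (l - y))) := by
    rw [mul_sub, mul_one]; linarith
  have hi : v x - φ x < v y - φ y := by linarith
  have hii : v l - φ l < v y - φ y := by linarith
  exact absurd hmax (not_le.mpr (max_lt hii hi))

theorem aux_osc
    (h₀ lam M : ℝ) (hh₀ : 0 < h₀) (hlam : 0 < lam) (hM : 0 ≤ M)
    (Gb : ℝ → ℝ → ℝ)
    (ψ : ℝ → ℝ) (hψc : ContinuousOn ψ (Ioc 0 h₀)) (hψpos : ∀ h ∈ Ioc 0 h₀, 0 < ψ h)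
    (hψint : IntegrableOn ψ (Ioo 0 h₀))
    (hcoer : ∀ h ∈ Ioc 0 h₀, ∀ q : ℝ, |q| / ψ h - M ≤ Gb h q)
    (v : ℝ → ℝ) (hvc : ContinuousOn v (Icc 0 h₀))
    (hsub : ∀ φ : ℝ → ℝ, ContDiff ℝ 1 φ → ∀ z ∈ Ioo 0 h₀,
      IsLocalMaxOn (fun h => v h - φ h) (Ioo 0 h₀) z →
      lam * v z + Gb z (deriv φ z) ≤ 0)
    (C : ℝ) (hC0 : 0 ≤ C) (hC : ∀ h ∈ Icc 0 h₀, |v h| ≤ C)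
    (y x : ℝ) (hy : 0 ≤ y) (hyx : y ≤ x) (hx : x ≤ h₀) :
    |v x - v y| ≤ (M + lam * C) *
      ((∫ s in (0:ℝ)..x, ψ s) - ∫ s in (0:ℝ)..y, ψ s) := by
  set K := M + lam * C with hK
  have hK0 : 0 ≤ K := by nlinarith
  have hψInt : IntegrableOn ψ (Icc 0 h₀) := by
    rw [integrableOn_Icc_iff_integrableOn_Ioo]; exact hψint
  have hII : ∀ a b : ℝ, 0 ≤ a → b ≤ h₀ → a ≤ b → IntervalIntegrable ψ volume a b := by
    intro a b ha hb hab
    refine (hψInt.mono_set ?_).intervalIntegrable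
    rw [uIcc_of_le hab]
    exact Icc_subset_Icc ha hb
  have hsplit : ∀ a b : ℝ, 0 ≤ a → b ≤ h₀ → a ≤ b →
      (∫ s in a..b, ψ s) = (∫ s in (0:ℝ)..b, ψ s) - ∫ s in (0:ℝ)..a, ψ s := by
    intro a b ha hb hab
    have := intervalIntegral.integral_add_adjacent_intervals
      (hII 0 a le_rfl (hb.trans' hab) ha) (hII a b ha hb hab)
    linarith
  -- interior case
  have interior : ∀ y' x' : ℝ, 0 < y' → y' ≤ x' → x' < h₀ →
      |v x' - v y'| ≤ K * ((∫ s in (0:ℝ)..x', ψ s) - ∫ s in (0:ℝ)..y', ψ s) := by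
    intro y' x' hy' hyx' hx'
    rw [← hsplit y' x' hy'.le hx'.le hyx']
    rw [abs_sub_le_iff]
    constructor
    · refine le_of_forall_pos_le_add ?_
      intro ζ hζ
      exact aux_up h₀ lam M hh₀ hlam hM Gb ψ hψc hψpos hcoer v hvc hsub C hC0 hC
        y' x' hy' hyx' hx' ζ hζ
    · refine le_of_forall_pos_le_add ?_
      intro ζ hζ
      exact aux_down h₀ lam M hh₀ hlam hM Gb ψ hψc hψpos hcoer v hvc hsub C hC0 hC
        y' x' hy' hyx' hx' ζ hζ
  -- continuity of the primitive
  have hΦc : ContinuousOn (fun t => ∫ s in (0:ℝ)..t, ψ s) (Icc 0 h₀) := by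
    refine (intervalIntegral.continuousOn_primitive hψInt).congr ?_
    intro t ht
    simp only
    rw [intervalIntegral.integral_of_le ht.1]
  set Φ : ℝ → ℝ := fun t => ∫ s in (0:ℝ)..t, ψ s with hΦ
  -- extend to x = h₀
  have stepA : ∀ y' x' : ℝ, 0 < y' → y' ≤ x' → x' ≤ h₀ →
      |v x' - v y'| ≤ K * (Φ x' - Φ y') := by
    intro y' x' hy' hyx' hx'
    rcases eq_or_lt_of_le hyx' with rfl | hylt
    · simp
    rcases lt_or_eq_of_le hx' with hlt | heq
    · exact interior y' x' hy' hyx' hlt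
    · have hyh : y' < h₀ := heq ▸ hylt
      have hne : (𝓝[Ico y' h₀] h₀).NeBot := by
        refine mem_closure_iff_nhdsWithin_neBot.mp ?_
        rw [closure_Ico (ne_of_lt hyh)]
        exact ⟨hyh.le, le_rfl⟩
      have hIsub : Ico y' h₀ ⊆ Icc 0 h₀ := fun t ht => ⟨hy'.le.trans ht.1, ht.2.le⟩
      have hvt : Tendsto (fun s => |v s - v y'|) (𝓝[Ico y' h₀] h₀) (𝓝 (|v h₀ - v y'|)) := by
        have h1 : Tendsto v (𝓝[Ico y' h₀] h₀) (𝓝 (v h₀)) :=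
          (hvc h₀ ⟨hh₀.le, le_rfl⟩).mono hIsub
        exact (h1.sub tendsto_const_nhds).abs
      have hΦt : Tendsto (fun s => K * (Φ s - Φ y')) (𝓝[Ico y' h₀] h₀)
          (𝓝 (K * (Φ h₀ - Φ y'))) := by
        have h1 : Tendsto Φ (𝓝[Ico y' h₀] h₀) (𝓝 (Φ h₀)) :=
          (hΦc h₀ ⟨hh₀.le, le_rfl⟩).mono hIsub
        exact (h1.sub tendsto_const_nhds).const_mul K
      have hle : ∀ᶠ s in 𝓝[Ico y' h₀] h₀, |v s - v y'| ≤ K * (Φ s - Φ y') := by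
        filter_upwards [self_mem_nhdsWithin] with s hs
        exact interior y' s hy' hs.1 hs.2
      rw [heq]
      exact le_of_tendsto_of_tendsto hvt hΦt hle
  -- extend to y = 0
  rcases eq_or_lt_of_le hy with hy0 | hy'
  · subst hy0
    rcases eq_or_lt_of_le hyx with rfl | hxpos
    · simp
    · have hne : (𝓝[Ioc 0 x] 0).NeBot := by
        refine mem_closure_iff_nhdsWithin_neBot.mp ?_
        rw [closure_Ioc hxpos.ne]
        exact ⟨le_rfl, hxpos.le⟩
      have hIsub : Ioc 0 x ⊆ Icc 0 h₀ := fun t ht => ⟨ht.1.le, ht.2.trans hx⟩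
      have hvt : Tendsto (fun t => |v x - v t|) (𝓝[Ioc 0 x] 0) (𝓝 (|v x - v 0|)) := by
        have h1 : Tendsto v (𝓝[Ioc 0 x] 0) (𝓝 (v 0)) :=
          (hvc 0 ⟨le_rfl, hh₀.le⟩).mono hIsub
        exact (tendsto_const_nhds.sub h1).abs
      have hΦt : Tendsto (fun t => K * (Φ x - Φ t)) (𝓝[Ioc 0 x] 0)
          (𝓝 (K * (Φ x - Φ 0))) := by
        have h1 : Tendsto Φ (𝓝[Ioc 0 x] 0) (𝓝 (Φ 0)) :=
          (hΦc 0 ⟨le_rfl, hh₀.le⟩).mono hIsub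
        exact (tendsto_const_nhds.sub h1).const_mul K
      have hle : ∀ᶠ t in 𝓝[Ioc 0 x] 0, |v x - v t| ≤ K * (Φ x - Φ t) := by
        filter_upwards [self_mem_nhdsWithin] with t ht
        exact stepA t x ht.1 ht.2 hx
      exact le_of_tendsto_of_tendsto hvt hΦt hle
  · exact stepA y x hy' hyx hx


/-- Under an integrable coercivity bound `Ḡ(h,q) ≥ |q|/ψ(h) − M`,
any uniformly bounded family of continuous functions on `[0, h₀]` that are viscosity
subsolutions of `λ v + Ḡ(h, v′) = 0` in `(0, h₀)` is equi-continuous on `[0, h₀]`. -/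
theorem subsolutions_equicontinuous
    (h₀ lam M : ℝ) (hh₀ : 0 < h₀) (hlam : 0 < lam) (hM : 0 ≤ M)
    (Gb : ℝ → ℝ → ℝ)
    (hGb : ContinuousOn (fun p : ℝ × ℝ => Gb p.1 p.2) (Ioc 0 h₀ ×ˢ (univ : Set ℝ)))
    (ψ : ℝ → ℝ) (hψc : ContinuousOn ψ (Ioc 0 h₀)) (hψpos : ∀ h ∈ Ioc 0 h₀, 0 < ψ h)
    (hψint : IntegrableOn ψ (Ioo 0 h₀))
    (hcoer : ∀ h ∈ Ioc 0 h₀, ∀ q : ℝ, |q| / ψ h - M ≤ Gb h q)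
    (F : Set (ℝ → ℝ))
    (hFc : ∀ v ∈ F, ContinuousOn v (Icc 0 h₀))
    (hFsub : ∀ v ∈ F, ∀ φ : ℝ → ℝ, ContDiff ℝ 1 φ → ∀ z ∈ Ioo 0 h₀,
      IsLocalMaxOn (fun h => v h - φ h) (Ioo 0 h₀) z →
      lam * v z + Gb z (deriv φ z) ≤ 0)
    (hFbdd : ∃ C : ℝ, ∀ v ∈ F, ∀ h ∈ Icc 0 h₀, |v h| ≤ C) :
    EquicontinuousOn (fun v : F => (v : ℝ → ℝ)) (Icc 0 h₀) := by
  obtain ⟨C₀, hC₀⟩ := hFbdd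
  set C := max C₀ 0 with hCdef
  have hC0 : 0 ≤ C := le_max_right _ _
  have hC : ∀ v ∈ F, ∀ h ∈ Icc 0 h₀, |v h| ≤ C :=
    fun v hv h hh => (hC₀ v hv h hh).trans (le_max_left _ _)
  set K := M + lam * C with hK
  have hK0 : 0 ≤ K := by positivity
  set Φ : ℝ → ℝ := fun t => ∫ s in (0:ℝ)..t, ψ s with hΦ
  have hψInt : IntegrableOn ψ (Icc 0 h₀) := by
    rw [integrableOn_Icc_iff_integrableOn_Ioo]; exact hψint
  have hΦc : ContinuousOn Φ (Icc 0 h₀) := by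
    refine (intervalIntegral.continuousOn_primitive hψInt).congr ?_
    intro t ht
    simp only [hΦ]
    rw [intervalIntegral.integral_of_le ht.1]
  -- the key uniform modulus
  have hosc : ∀ v ∈ F, ∀ y ∈ Icc 0 h₀, ∀ x ∈ Icc 0 h₀, y ≤ x →
      |v x - v y| ≤ K * (Φ x - Φ y) := by
    intro v hv y hy x hx hyx
    exact aux_osc h₀ lam M hh₀ hlam hM Gb ψ hψc hψpos hψint hcoer v (hFc v hv)
      (hFsub v hv) C hC0 (hC v hv) y x hy.1 hyx hx.2
  intro x₀ hx₀ U hU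
  obtain ⟨ε, hε, hUε⟩ := mem_uniformity_dist.mp hU
  have hεK : 0 < ε / (K + 1) := by positivity
  have hΦx : Tendsto Φ (𝓝[Icc 0 h₀] x₀) (𝓝 (Φ x₀)) := hΦc x₀ hx₀
  have hev : ∀ᶠ s in 𝓝[Icc 0 h₀] x₀, dist (Φ s) (Φ x₀) < ε / (K + 1) :=
    hΦx (Metric.ball_mem_nhds _ hεK)
  filter_upwards [hev, self_mem_nhdsWithin] with s hs hsmem
  intro i
  refine hUε ?_
  have hKd : K * |Φ s - Φ x₀| < ε := by
    have h1 : K * |Φ s - Φ x₀| ≤ K * (ε / (K + 1)) := by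
      refine mul_le_mul_of_nonneg_left ?_ hK0
      rw [Real.dist_eq] at hs
      exact hs.le
    have h2 : K * (ε / (K + 1)) < ε := by
      rw [mul_comm, div_mul_eq_mul_div, div_lt_iff₀ (by linarith)]
      nlinarith
    exact h1.trans_lt h2
  have hkey : |(i : ℝ → ℝ) s - (i : ℝ → ℝ) x₀| ≤ K * |Φ s - Φ x₀| := by
    rcases le_total x₀ s with hle | hle
    · have := hosc i i.2 x₀ hx₀ s hsmem hle
      refine this.trans (mul_le_mul_of_nonneg_left (le_abs_self _) hK0)
    · have := hosc i i.2 s hsmem x₀ hx₀ hle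
      rw [abs_sub_comm]
      refine this.trans ?_
      refine mul_le_mul_of_nonneg_left ?_ hK0
      rw [abs_sub_comm]
      exact le_abs_self _
  rw [Real.dist_eq]
  have : |(i : ℝ → ℝ) x₀ - (i : ℝ → ℝ) s| = |(i : ℝ → ℝ) s - (i : ℝ → ℝ) x₀| :=
    abs_sub_comm _ _
  rw [this]
  exact lt_of_le_of_lt hkey hKd
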